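/- arXiv:1605.00217 — 4 statements merged into one kernel-verified Lean document; each statement's English description precedes it below -/
import Mathlib

section
/- Let 1 ≤ p < q < ∞ and define the sequence x = (x_k)_{k∈ℤ} by x_k = |k|^{−1/q} for k ≠ 0 and x_0 = 1. Then x is not p-summable (∑_{k∈ℤ} |x_k|^p = ∞), but for all m ∈ ℤ and N ∈ ℕ one has (2N+1)^{p/q − 1} ∑_{k∈S_{m,N}} |x_k|^p ≤ 3 + 2q/(q−p); in particular ‖x‖_{ℓ^p_q} ≤ (3 + 2q/(q−p))^{1/p} < ∞, so x ∈ ℓ^p_q and the inclusion ℓ^p ⊆ ℓ^p_q is strict. -/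
open scoped ENNReal NNReal BigOperators

/-- The discrete "ball" `S_{m,N} = {m-N, …, m+N}` as a finite set of integers. -/
noncomputable def S (m : ℤ) (N : ℕ) : Finset ℤ := Finset.Icc (m - N) (m + N)

/-- The discrete Morrey norm `‖x‖_{ℓ^p_q}`. -/
noncomputable def morreyNorm (p q : ℝ) (x : ℤ → ℂ) : ℝ≥0∞ :=
  ⨆ (m : ℤ) (N : ℕ),
    (2 * (N : ℝ≥0∞) + 1) ^ (1 / q - 1 / p) *
      (∑ k ∈ S m N, (‖x k‖₊ : ℝ≥0∞) ^ p) ^ (1 / p)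

/-- Bernoulli-type estimate: `β * n ^ (β - 1) ≤ n ^ β - (n-1) ^ β` for `0 < β ≤ 1`, `1 ≤ n`. -/
lemma bern {β n : ℝ} (hβ0 : 0 < β) (hβ1 : β ≤ 1) (hn : 1 ≤ n) :
    β * n ^ (β - 1) ≤ n ^ β - (n - 1) ^ β := by
  have hn0 : (0:ℝ) < n := by linarith
  have h1n : 1 / n ≤ 1 := by
    rw [div_le_one hn0]; linarith
  have key : (1 - 1 / n) ^ β ≤ 1 - β * (1 / n) := by
    have := rpow_one_add_le_one_add_mul_self (s := -(1 / n)) (by linarith) hβ0.le hβ1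
    simpa [sub_eq_add_neg, mul_neg] using this
  have hmul : (n - 1) ^ β = n ^ β * (1 - 1 / n) ^ β := by
    rw [← Real.mul_rpow hn0.le (by linarith [one_div_pos.mpr hn0] : (0:ℝ) ≤ 1 - 1 / n)]
    congr 1
    field_simp
  have hpow : n ^ β * (1 / n) = n ^ (β - 1) := by
    rw [Real.rpow_sub hn0, Real.rpow_one, mul_one_div]
  have hnb : 0 ≤ n ^ β := Real.rpow_nonneg hn0.le β
  calc β * n ^ (β - 1) = n ^ β - n ^ β * (1 - β * (1 / n)) := by
        rw [← hpow]; ring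
    _ ≤ n ^ β - (n - 1) ^ β := by
        rw [hmul]
        have := mul_le_mul_of_nonneg_left key hnb
        linarith

/-- Sum estimate: `∑_{j=1}^N j^(-α) ≤ N^(1-α)/(1-α)` for `0 < α < 1`. -/
lemma sum_rpow_le {α : ℝ} (hα0 : 0 < α) (hα1 : α < 1) (N : ℕ) :
    ∑ j ∈ Finset.Icc (1:ℤ) (N:ℤ), |(j:ℝ)| ^ (-α) ≤ (N:ℝ) ^ (1-α) / (1-α) := by
  have hβ0 : (0:ℝ) < 1 - α := by linarith
  induction N with
  | zero =>
      simp [Real.zero_rpow (ne_of_gt hβ0)]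
  | succ N ih =>
      have hcast : ((N+1 : ℕ) : ℤ) = (N : ℤ) + 1 := by push_cast; ring
      have hins : Finset.Icc (1:ℤ) ((N:ℤ) + 1) = insert ((N:ℤ)+1) (Finset.Icc (1:ℤ) (N:ℤ)) := by
        ext k; simp only [Finset.mem_Icc, Finset.mem_insert]; omega
      rw [hcast, hins, Finset.sum_insert (by simp only [Finset.mem_Icc]; omega), add_comm]
      have hb := bern hβ0 (by linarith)
        (by nlinarith [Nat.cast_nonneg (α := ℝ) N] : (1:ℝ) ≤ (N:ℝ) + 1)
      rw [show (1 - α) - 1 = -α from by ring,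
        show ((N:ℝ) + 1) - 1 = (N:ℝ) from by ring] at hb
      have habs : |(((N:ℤ) + 1 : ℤ) : ℝ)| = (N:ℝ) + 1 := by
        push_cast; rw [abs_of_nonneg (by positivity)]
      rw [habs]
      push_cast
      rw [le_div_iff₀ hβ0] at ih ⊢
      nlinarith [ih, hb]

theorem stmt1 (p q : ℝ) (hp : 1 ≤ p) (hpq : p < q) (x : ℤ → ℂ)
    (hx : ∀ k : ℤ, x k = if k = 0 then 1 else ((|(k : ℝ)| ^ (-(1 / q)) : ℝ) : ℂ)) :
    (¬ Summable fun k : ℤ => ‖x k‖ ^ p) ∧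
    (∀ (m : ℤ) (N : ℕ),
      (2 * (N : ℝ) + 1) ^ (p / q - 1) * ∑ k ∈ S m N, ‖x k‖ ^ p ≤ 3 + 2 * q / (q - p)) ∧
    morreyNorm p q x ≤ ENNReal.ofReal ((3 + 2 * q / (q - p)) ^ (1 / p)) := by
  have hp0 : (0:ℝ) < p := lt_of_lt_of_le one_pos hp
  have hq0 : (0:ℝ) < q := lt_trans hp0 hpq
  set α : ℝ := p / q with hα
  have hα0 : 0 < α := div_pos hp0 hq0
  have hα1 : α < 1 := (div_lt_one hq0).mpr hpq
  have hβ0 : (0:ℝ) < 1 - α := by linarith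
  -- value of ‖x k‖ ^ p
  have fval : ∀ k : ℤ, ‖x k‖ ^ p = if k = 0 then (1:ℝ) else |(k:ℝ)| ^ (-α) := by
    intro k
    rw [hx k]
    by_cases hk : k = 0
    · simp [hk]
    · rw [if_neg hk, if_neg hk, Complex.norm_real, Real.norm_eq_abs,
        abs_of_nonneg (Real.rpow_nonneg (abs_nonneg _) _),
        ← Real.rpow_mul (abs_nonneg _)]
      congr 1
      rw [hα]; ring
  have hf0 : ∀ k : ℤ, 0 ≤ ‖x k‖ ^ p := fun k => Real.rpow_nonneg (norm_nonneg _) p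
  -- Part 1: not summable
  have part1 : ¬ Summable fun k : ℤ => ‖x k‖ ^ p := by
    intro h
    have h1 : Summable fun n : ℕ => ‖x (n : ℤ)‖ ^ p :=
      h.comp_injective (fun a b hab => by exact_mod_cast hab)
    have h2 : Summable fun n : ℕ => ‖x ((n + 1 : ℕ) : ℤ)‖ ^ p :=
      (summable_nat_add_iff 1).mpr h1
    have h3 : Summable fun n : ℕ => (((n + 1 : ℕ) : ℝ)) ^ (-α) := by
      refine h2.congr fun n => ?_
      rw [fval]
      rw [if_neg (by omega)]
      congr 1
      push_cast
      rw [abs_of_nonneg (by positivity)]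
    have h4 : Summable fun n : ℕ => ((n : ℝ)) ^ (-α) :=
      (summable_nat_add_iff 1).mp (by exact_mod_cast h3)
    rw [Real.summable_nat_rpow] at h4
    linarith
  -- Part 2: the main estimate
  have part2 : ∀ (m : ℤ) (N : ℕ),
      (2 * (N : ℝ) + 1) ^ (p / q - 1) * ∑ k ∈ S m N, ‖x k‖ ^ p ≤ 3 + 2 * q / (q - p) := by
    intro m N
    set D : ℝ := 2 * (N : ℝ) + 1 with hD
    have hD1 : (1:ℝ) ≤ D := by have := Nat.cast_nonneg (α := ℝ) N; rw [hD]; linarith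
    have hD0 : (0:ℝ) < D := by linarith
    set T : Finset ℤ := S m N with hT
    set B : Finset ℤ := Finset.Icc (-(N:ℤ)) (N:ℤ) with hB
    -- split the sum
    have hsplit : ∑ k ∈ T, ‖x k‖ ^ p
        = ∑ k ∈ T ∩ B, ‖x k‖ ^ p + ∑ k ∈ T \ B, ‖x k‖ ^ p :=
      (Finset.sum_inter_add_sum_sdiff T B _).symm
    -- sum over the centered ball
    have hBsum : ∑ k ∈ B, ‖x k‖ ^ p
        ≤ 1 + 2 * ∑ j ∈ Finset.Icc (1:ℤ) (N:ℤ), |(j:ℝ)| ^ (-α) := by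
      have hUnion : B = Finset.Icc (-(N:ℤ)) (-1) ∪ Finset.Icc (0:ℤ) (N:ℤ) := by
        ext k; simp only [hB, Finset.mem_Icc, Finset.mem_union]; omega
      have hdisj : Disjoint (Finset.Icc (-(N:ℤ)) (-1)) (Finset.Icc (0:ℤ) (N:ℤ)) := by
        rw [Finset.disjoint_left]; intro a ha hb
        simp only [Finset.mem_Icc] at ha hb; omega
      rw [hUnion, Finset.sum_union hdisj]
      have hneg : ∑ k ∈ Finset.Icc (-(N:ℤ)) (-1), ‖x k‖ ^ p
          = ∑ j ∈ Finset.Icc (1:ℤ) (N:ℤ), ‖x j‖ ^ p := by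
        apply Finset.sum_nbij' (fun k => -k) (fun k => -k)
        · intro a ha; simp only [Finset.mem_Icc] at *; omega
        · intro a ha; simp only [Finset.mem_Icc] at *; omega
        · intro a _; ring
        · intro a _; ring
        · intro a ha
          rw [fval, fval, if_neg (by simp only [Finset.mem_Icc] at ha; omega),
            if_neg (by simp only [Finset.mem_Icc] at ha; omega)]
          congr 1
          push_cast
          rw [abs_neg]
      have hzero : ∑ k ∈ Finset.Icc (0:ℤ) (N:ℤ), ‖x k‖ ^ p
          = 1 + ∑ j ∈ Finset.Icc (1:ℤ) (N:ℤ), ‖x j‖ ^ p := by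
        have : Finset.Icc (0:ℤ) (N:ℤ) = insert 0 (Finset.Icc (1:ℤ) (N:ℤ)) := by
          ext k; simp only [Finset.mem_Icc, Finset.mem_insert]; omega
        rw [this, Finset.sum_insert (by simp)]
        congr 1
        rw [fval, if_pos rfl]
      have hjval : ∑ j ∈ Finset.Icc (1:ℤ) (N:ℤ), ‖x j‖ ^ p
          = ∑ j ∈ Finset.Icc (1:ℤ) (N:ℤ), |(j:ℝ)| ^ (-α) := by
        apply Finset.sum_congr rfl
        intro j hj
        rw [fval, if_neg (by simp only [Finset.mem_Icc] at hj; omega)]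
      rw [hneg, hzero, hjval]
      linarith
    -- inner part
    have hinner : ∑ k ∈ T ∩ B, ‖x k‖ ^ p ≤ 1 + 2 * ((N:ℝ) ^ (1-α) / (1-α)) := by
      calc ∑ k ∈ T ∩ B, ‖x k‖ ^ p ≤ ∑ k ∈ B, ‖x k‖ ^ p :=
            Finset.sum_le_sum_of_subset_of_nonneg Finset.inter_subset_right
              (fun k _ _ => hf0 k)
        _ ≤ 1 + 2 * ∑ j ∈ Finset.Icc (1:ℤ) (N:ℤ), |(j:ℝ)| ^ (-α) := hBsum
        _ ≤ 1 + 2 * ((N:ℝ) ^ (1-α) / (1-α)) := by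
            have := sum_rpow_le hα0 hα1 N
            linarith
    -- outer part
    have houter : ∑ k ∈ T \ B, ‖x k‖ ^ p ≤ D * ((N:ℝ) + 1) ^ (-α) := by
      have hbd : ∀ k ∈ T \ B, ‖x k‖ ^ p ≤ ((N:ℝ) + 1) ^ (-α) := by
        intro k hk
        rw [Finset.mem_sdiff] at hk
        have hknotB : ¬ (-(N:ℤ) ≤ k ∧ k ≤ (N:ℤ)) := by
          simpa [hB, Finset.mem_Icc] using hk.2
        have hk0 : k ≠ 0 := by omega
        rw [fval, if_neg hk0]
        apply Real.rpow_le_rpow_of_nonpos (by positivity)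
        · have : (N:ℤ) + 1 ≤ |k| := by rw [abs]; omega
          calc ((N:ℝ) + 1) = (((N:ℤ) + 1 : ℤ) : ℝ) := by push_cast; ring
            _ ≤ ((|k| : ℤ) : ℝ) := by exact_mod_cast this
            _ = |(k:ℝ)| := by push_cast; ring
        · linarith
      calc ∑ k ∈ T \ B, ‖x k‖ ^ p ≤ (T \ B).card • (((N:ℝ) + 1) ^ (-α)) :=
            Finset.sum_le_card_nsmul _ _ _ hbd
        _ = ((T \ B).card : ℝ) * ((N:ℝ) + 1) ^ (-α) := by
            rw [nsmul_eq_mul]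
        _ ≤ D * ((N:ℝ) + 1) ^ (-α) := by
            apply mul_le_mul_of_nonneg_right _ (Real.rpow_nonneg (by positivity) _)
            have hcard : (T.card : ℝ) = D := by
              rw [hT]
              have : (S m N).card = 2 * N + 1 := by
                rw [S, Int.card_Icc]
                have : m + (N:ℤ) + 1 - (m - (N:ℤ)) = 2 * N + 1 := by ring
                rw [this]
                omega
              rw [this, hD]; push_cast; ring
            calc ((T \ B).card : ℝ) ≤ (T.card : ℝ) := by
                  exact_mod_cast Finset.card_le_card (Finset.sdiff_subset)
              _ = D := hcard
    -- exponent arithmetic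
    have hDne : D ^ (α - 1) * D ^ (1 - α) = 1 := by
      rw [← Real.rpow_add hD0]
      norm_num
    have hDα : D ^ (α - 1) * D = D ^ α := by
      nth_rewrite 2 [← Real.rpow_one D]
      rw [← Real.rpow_add hD0]
      norm_num
    have hDpos : 0 < D ^ (α - 1) := Real.rpow_pos_of_pos hD0 _
    have hterm1 : D ^ (α - 1) ≤ 1 :=
      Real.rpow_le_one_of_one_le_of_nonpos hD1 (by linarith)
    have hterm2 : D ^ (α - 1) * (N:ℝ) ^ (1-α) ≤ 1 := by
      calc D ^ (α - 1) * (N:ℝ) ^ (1-α) ≤ D ^ (α - 1) * D ^ (1-α) := by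
            apply mul_le_mul_of_nonneg_left _ hDpos.le
            apply Real.rpow_le_rpow (Nat.cast_nonneg N) (by rw [hD]; linarith) hβ0.le
        _ = 1 := hDne
    have hterm3 : D ^ (α - 1) * (D * ((N:ℝ) + 1) ^ (-α)) ≤ 2 := by
      rw [← mul_assoc, hDα]
      have h2a : D ^ α ≤ 2 ^ α * ((N:ℝ) + 1) ^ α := by
        rw [← Real.mul_rpow (by norm_num) (by positivity)]
        apply Real.rpow_le_rpow hD0.le (by rw [hD]; linarith) hα0.le
      have hNα : ((N:ℝ) + 1) ^ α * ((N:ℝ) + 1) ^ (-α) = 1 := by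
        rw [← Real.rpow_add (by positivity)]
        norm_num
      have h2α : (2:ℝ) ^ α ≤ 2 := by
        calc (2:ℝ) ^ α ≤ 2 ^ (1:ℝ) :=
              Real.rpow_le_rpow_of_exponent_le (by norm_num) hα1.le
          _ = 2 := Real.rpow_one 2
      have hne : 0 ≤ ((N:ℝ) + 1) ^ (-α) := Real.rpow_nonneg (by positivity) _
      calc D ^ α * ((N:ℝ) + 1) ^ (-α) ≤ 2 ^ α * ((N:ℝ) + 1) ^ α * ((N:ℝ) + 1) ^ (-α) :=
            mul_le_mul_of_nonneg_right h2a hne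
        _ = 2 ^ α * (((N:ℝ) + 1) ^ α * ((N:ℝ) + 1) ^ (-α)) := by ring
        _ = 2 ^ α := by rw [hNα, mul_one]
        _ ≤ 2 := h2α
    have hconst : 2 * q / (q - p) = 2 / (1 - α) := by
      rw [hα, show 1 - p / q = (q - p) / q from by field_simp, div_div_eq_mul_div]
    have hexp' : p / q - 1 = α - 1 := by rw [hα]
    rw [hexp', hconst, hsplit]
    have hsum2 : ∑ k ∈ T \ B, ‖x k‖ ^ p ≥ 0 := Finset.sum_nonneg fun k _ => hf0 k
    calc D ^ (α - 1) * (∑ k ∈ T ∩ B, ‖x k‖ ^ p + ∑ k ∈ T \ B, ‖x k‖ ^ p)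
        ≤ D ^ (α - 1) * ((1 + 2 * ((N:ℝ) ^ (1-α) / (1-α))) + D * ((N:ℝ) + 1) ^ (-α)) := by
          exact mul_le_mul_of_nonneg_left (add_le_add hinner houter) hDpos.le
      _ = D ^ (α - 1) + (2 / (1-α)) * (D ^ (α - 1) * (N:ℝ) ^ (1-α))
            + D ^ (α - 1) * (D * ((N:ℝ) + 1) ^ (-α)) := by
          field_simp
      _ ≤ 1 + (2 / (1-α)) * 1 + 2 := by
          have h2β : 0 ≤ 2 / (1-α) := by positivity
          exact add_le_add (add_le_add hterm1 (mul_le_mul_of_nonneg_left hterm2 h2β)) hterm3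
      _ = 3 + 2 / (1-α) := by ring
  refine ⟨part1, part2, ?_⟩
  -- Part 3
  rw [morreyNorm]
  apply iSup_le
  intro m
  apply iSup_le
  intro N
  set D : ℝ := 2 * (N : ℝ) + 1 with hD
  have hD0 : (0:ℝ) < D := by positivity
  have hS0 : (0:ℝ) ≤ ∑ k ∈ S m N, ‖x k‖ ^ p := Finset.sum_nonneg fun k _ => hf0 k
  -- real-valued inequality
  have hreal : D ^ (1 / q - 1 / p) * (∑ k ∈ S m N, ‖x k‖ ^ p) ^ (1 / p)
      ≤ (3 + 2 * q / (q - p)) ^ (1 / p) := by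
    have hexp : (p / q - 1) * (1 / p) = 1 / q - 1 / p := by
      field_simp
    have h1 : D ^ (1 / q - 1 / p) = (D ^ (p / q - 1)) ^ (1 / p) := by
      rw [← Real.rpow_mul hD0.le, hexp]
    rw [h1, ← Real.mul_rpow (Real.rpow_nonneg hD0.le _) hS0]
    exact Real.rpow_le_rpow
      (mul_nonneg (Real.rpow_nonneg hD0.le _) hS0) (part2 m N) (by positivity)
  -- convert both sides to ofReal
  have hbase : (2 * (N : ℝ≥0∞) + 1) = ENNReal.ofReal D := by
    rw [hD, ENNReal.ofReal_add (by positivity) zero_le_one, ENNReal.ofReal_one,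
      ENNReal.ofReal_mul (by norm_num), ENNReal.ofReal_ofNat, ENNReal.ofReal_natCast]
  have hsum : ∑ k ∈ S m N, (‖x k‖₊ : ℝ≥0∞) ^ p
      = ENNReal.ofReal (∑ k ∈ S m N, ‖x k‖ ^ p) := by
    rw [ENNReal.ofReal_sum_of_nonneg (fun k _ => hf0 k)]
    apply Finset.sum_congr rfl
    intro k _
    rw [← ENNReal.ofReal_rpow_of_nonneg (norm_nonneg _) hp0.le, ofReal_norm, enorm_eq_nnnorm]
  rw [hbase, hsum, ENNReal.ofReal_rpow_of_pos hD0,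
    ENNReal.ofReal_rpow_of_nonneg hS0 (by positivity), ← ENNReal.ofReal_mul
      (Real.rpow_nonneg hD0.le _)]
  exact ENNReal.ofReal_le_ofReal hreal
end

section
/- Let 1 ≤ p ≤ q < ∞. For all sequences x, y with ‖x‖_{ℓ^p_q} < ∞ and ‖y‖_{ℓ^p_q} < ∞, the triangle inequality ‖x + y‖_{ℓ^p_q} ≤ ‖x‖_{ℓ^p_q} + ‖y‖_{ℓ^p_q} holds; together with absolute homogeneity ‖αx‖_{ℓ^p_q} = |α| ‖x‖_{ℓ^p_q} and the fact that ‖x‖_{ℓ^p_q} = 0 if and only if x = 0, this shows ‖·‖_{ℓ^p_q} is a norm on ℓ^p_q. -/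
open scoped ENNReal NNReal BigOperators

theorem stmt2 (p q : ℝ) (hp : 1 ≤ p) (hpq : p ≤ q) :
    (∀ x y : ℤ → ℂ, morreyNorm p q x < ⊤ → morreyNorm p q y < ⊤ →
      morreyNorm p q (x + y) ≤ morreyNorm p q x + morreyNorm p q y) ∧
    (∀ (α : ℂ) (x : ℤ → ℂ), morreyNorm p q (α • x) = (‖α‖₊ : ℝ≥0∞) * morreyNorm p q x) ∧
    (∀ x : ℤ → ℂ, morreyNorm p q x = 0 ↔ x = 0) := by
  have hp0 : (0:ℝ) < p := lt_of_lt_of_le one_pos hp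
  have hpne : p ≠ 0 := ne_of_gt hp0
  refine ⟨?_, ?_, ?_⟩
  · intro x y _ _
    refine iSup₂_le fun m N => ?_
    calc (2 * (N : ℝ≥0∞) + 1) ^ (1 / q - 1 / p) *
          (∑ k ∈ S m N, (‖(x + y) k‖₊ : ℝ≥0∞) ^ p) ^ (1 / p)
        ≤ (2 * (N : ℝ≥0∞) + 1) ^ (1 / q - 1 / p) *
          ((∑ k ∈ S m N, (‖x k‖₊ : ℝ≥0∞) ^ p) ^ (1 / p) +
           (∑ k ∈ S m N, (‖y k‖₊ : ℝ≥0∞) ^ p) ^ (1 / p)) := by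
          refine mul_le_mul_right ?_ _
          refine le_trans ?_ (ENNReal.Lp_add_le _ _ _ hp)
          refine ENNReal.rpow_le_rpow ?_ (by positivity)
          refine Finset.sum_le_sum fun k _ => ?_
          refine ENNReal.rpow_le_rpow ?_ hp0.le
          exact_mod_cast nnnorm_add_le (x k) (y k)
      _ = (2 * (N : ℝ≥0∞) + 1) ^ (1 / q - 1 / p) *
            (∑ k ∈ S m N, (‖x k‖₊ : ℝ≥0∞) ^ p) ^ (1 / p) +
          (2 * (N : ℝ≥0∞) + 1) ^ (1 / q - 1 / p) *
            (∑ k ∈ S m N, (‖y k‖₊ : ℝ≥0∞) ^ p) ^ (1 / p) := mul_add _ _ _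
      _ ≤ morreyNorm p q x + morreyNorm p q y := by
          refine add_le_add ?_ ?_
          · exact le_iSup₂ (f := fun (m : ℤ) (N : ℕ) =>
              (2 * (N : ℝ≥0∞) + 1) ^ (1 / q - 1 / p) *
                (∑ k ∈ S m N, (‖x k‖₊ : ℝ≥0∞) ^ p) ^ (1 / p)) m N
          · exact le_iSup₂ (f := fun (m : ℤ) (N : ℕ) =>
              (2 * (N : ℝ≥0∞) + 1) ^ (1 / q - 1 / p) *
                (∑ k ∈ S m N, (‖y k‖₊ : ℝ≥0∞) ^ p) ^ (1 / p)) m N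
  · intro α x
    have key : ∀ (m : ℤ) (N : ℕ),
        (2 * (N : ℝ≥0∞) + 1) ^ (1 / q - 1 / p) *
          (∑ k ∈ S m N, (‖(α • x) k‖₊ : ℝ≥0∞) ^ p) ^ (1 / p) =
        (‖α‖₊ : ℝ≥0∞) * ((2 * (N : ℝ≥0∞) + 1) ^ (1 / q - 1 / p) *
          (∑ k ∈ S m N, (‖x k‖₊ : ℝ≥0∞) ^ p) ^ (1 / p)) := by
      intro m N
      have h1 : ∀ k : ℤ, (‖(α • x) k‖₊ : ℝ≥0∞) ^ p
          = (‖α‖₊ : ℝ≥0∞) ^ p * (‖x k‖₊ : ℝ≥0∞) ^ p := by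
        intro k
        rw [Pi.smul_apply, smul_eq_mul, nnnorm_mul, ENNReal.coe_mul,
          ENNReal.mul_rpow_of_nonneg _ _ hp0.le]
      simp_rw [h1]
      rw [← Finset.mul_sum,
        ENNReal.mul_rpow_of_nonneg _ _ (by positivity : (0:ℝ) ≤ 1 / p),
        ← ENNReal.rpow_mul, mul_one_div, div_self hpne, ENNReal.rpow_one,
        mul_left_comm]
    rw [morreyNorm, morreyNorm]
    simp_rw [key, ENNReal.mul_iSup]
  · intro x
    constructor
    · intro h
      funext k
      have hk : (‖x k‖₊ : ℝ≥0∞) ≤ morreyNorm p q x := by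
        have := le_iSup₂ (f := fun (m : ℤ) (N : ℕ) =>
          (2 * (N : ℝ≥0∞) + 1) ^ (1 / q - 1 / p) *
            (∑ j ∈ S m N, (‖x j‖₊ : ℝ≥0∞) ^ p) ^ (1 / p)) k 0
        simpa [morreyNorm, S, Finset.Icc_self, ← ENNReal.rpow_mul, mul_inv_cancel₀ hpne]
          using this
      rw [h] at hk
      simpa using le_antisymm hk zero_le
    · intro h
      subst h
      simp [morreyNorm, ENNReal.zero_rpow_of_pos hp0,
        ENNReal.zero_rpow_of_pos (by positivity : (0:ℝ) < 1 / p), hp0]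
end

section
/- Let 1 ≤ p ≤ q < ∞. The discrete Morrey space ℓ^p_q is complete with respect to the norm ‖·‖_{ℓ^p_q}: every Cauchy sequence (x^{(n)})_{n∈ℕ} in ℓ^p_q (i.e., for every ε > 0 there is n_ε with ‖x^{(i)} − x^{(j)}‖_{ℓ^p_q} < ε for all i, j ≥ n_ε) converges in the norm ‖·‖_{ℓ^p_q} to some x ∈ ℓ^p_q. -/
open scoped ENNReal NNReal BigOperators

/-- One term of the Morrey supremum. -/
noncomputable def morreyT (p q : ℝ) (m : ℤ) (N : ℕ) (x : ℤ → ℂ) : ℝ≥0∞ :=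
  (2 * (N : ℝ≥0∞) + 1) ^ (1 / q - 1 / p) *
    (∑ k ∈ S m N, (‖x k‖₊ : ℝ≥0∞) ^ p) ^ (1 / p)

lemma morreyNorm_eq (p q : ℝ) (x : ℤ → ℂ) :
    morreyNorm p q x = ⨆ (m : ℤ) (N : ℕ), morreyT p q m N x := rfl

lemma morreyT_le (p q : ℝ) (m : ℤ) (N : ℕ) (x : ℤ → ℂ) :
    morreyT p q m N x ≤ morreyNorm p q x := by
  rw [morreyNorm_eq]
  exact le_iSup₂ (f := fun m N => morreyT p q m N x) m N

lemma coe_const_ne_top (p q : ℝ) (N : ℕ) :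
    (2 * (N : ℝ≥0∞) + 1) ^ (1 / q - 1 / p) ≠ ⊤ := by
  have h0 : (2 * (N : ℝ≥0∞) + 1) ≠ 0 := by simp
  have ht : (2 * (N : ℝ≥0∞) + 1) ≠ ⊤ :=
    ENNReal.add_ne_top.2 ⟨ENNReal.mul_ne_top (by norm_num) (ENNReal.natCast_ne_top N),
      ENNReal.one_ne_top⟩
  simp [ENNReal.rpow_eq_top_iff, h0, ht]

lemma nnnorm_le_morreyNorm (p q : ℝ) (hp : 1 ≤ p) (x : ℤ → ℂ) (k : ℤ) :
    (‖x k‖₊ : ℝ≥0∞) ≤ morreyNorm p q x := by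
  have hp0 : p ≠ 0 := by linarith
  have h1 : morreyT p q k 0 x = (‖x k‖₊ : ℝ≥0∞) := by
    have hS : S k 0 = {k} := by
      simp [S, Finset.Icc_self]
    rw [morreyT, hS]
    simp only [Nat.cast_zero, mul_zero, zero_add, ENNReal.one_rpow, one_mul,
      Finset.sum_singleton]
    rw [← ENNReal.rpow_mul, mul_one_div_cancel hp0, ENNReal.rpow_one]
  calc (‖x k‖₊ : ℝ≥0∞) = morreyT p q k 0 x := h1.symm
    _ ≤ morreyNorm p q x := morreyT_le p q k 0 x

/-- Minkowski-type inequality for the terms. -/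
lemma morreyT_add_le (p q : ℝ) (hp : 1 ≤ p) (m : ℤ) (N : ℕ) (u v : ℤ → ℂ) :
    morreyT p q m N (u + v) ≤ morreyT p q m N u + morreyT p q m N v := by
  have hp0 : 0 < p := lt_of_lt_of_le zero_lt_one hp
  rw [morreyT, morreyT, morreyT, ← mul_add]
  refine mul_le_mul_right ?_ _
  calc (∑ k ∈ S m N, (‖(u + v) k‖₊ : ℝ≥0∞) ^ p) ^ (1 / p)
      ≤ (∑ k ∈ S m N, ((‖u k‖₊ : ℝ≥0∞) + (‖v k‖₊ : ℝ≥0∞)) ^ p) ^ (1 / p) := by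
        refine ENNReal.rpow_le_rpow ?_ (by positivity)
        refine Finset.sum_le_sum fun k _ => ?_
        refine ENNReal.rpow_le_rpow ?_ hp0.le
        rw [← ENNReal.coe_add, ENNReal.coe_le_coe]
        exact nnnorm_add_le _ _
    _ ≤ (∑ k ∈ S m N, (‖u k‖₊ : ℝ≥0∞) ^ p) ^ (1 / p) +
          (∑ k ∈ S m N, (‖v k‖₊ : ℝ≥0∞) ^ p) ^ (1 / p) :=
        ENNReal.Lp_add_le _ _ _ hp

lemma morreyT_congr (p q : ℝ) (m : ℤ) (N : ℕ) {u v : ℤ → ℂ}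
    (h : ∀ k, ‖u k‖₊ = ‖v k‖₊) : morreyT p q m N u = morreyT p q m N v := by
  unfold morreyT
  congr 2
  exact Finset.sum_congr rfl fun k _ => by rw [h k]

open Filter Topology in
lemma morreyT_tendsto (p q : ℝ) (hp : 0 < p) (m : ℤ) (N : ℕ)
    (f : ℕ → ℤ → ℂ) (g : ℤ → ℂ)
    (h : ∀ k, Tendsto (fun j => f j k) atTop (𝓝 (g k))) :
    Tendsto (fun j => morreyT p q m N (f j)) atTop (𝓝 (morreyT p q m N g)) := by
  have hsum : Tendsto (fun j => ∑ k ∈ S m N, (‖f j k‖₊ : ℝ≥0∞) ^ p) atTop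
      (𝓝 (∑ k ∈ S m N, (‖g k‖₊ : ℝ≥0∞) ^ p)) := by
    refine tendsto_finset_sum _ fun k _ => ?_
    have h1 : Tendsto (fun j => (‖f j k‖₊ : ℝ≥0∞)) atTop (𝓝 (‖g k‖₊ : ℝ≥0∞)) :=
      ENNReal.tendsto_coe.2 ((h k).nnnorm)
    exact (ENNReal.continuous_rpow_const.tendsto _).comp h1
  have hrpow : Tendsto (fun j => (∑ k ∈ S m N, (‖f j k‖₊ : ℝ≥0∞) ^ p) ^ (1 / p)) atTop
      (𝓝 ((∑ k ∈ S m N, (‖g k‖₊ : ℝ≥0∞) ^ p) ^ (1 / p))) :=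
    (ENNReal.continuous_rpow_const.tendsto _).comp hsum
  exact ENNReal.Tendsto.const_mul hrpow (Or.inr (coe_const_ne_top p q N))

theorem stmt3 (p q : ℝ) (hp : 1 ≤ p) (hpq : p ≤ q) (X : ℕ → ℤ → ℂ)
    (hmem : ∀ n : ℕ, morreyNorm p q (X n) < ⊤)
    (hcauchy : ∀ ε : ℝ, 0 < ε → ∃ n₀ : ℕ, ∀ i j : ℕ, n₀ ≤ i → n₀ ≤ j →
      morreyNorm p q (X i - X j) < ENNReal.ofReal ε) :
    ∃ x : ℤ → ℂ, morreyNorm p q x < ⊤ ∧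
      ∀ ε : ℝ, 0 < ε → ∃ n₀ : ℕ, ∀ n : ℕ, n₀ ≤ n →
        morreyNorm p q (X n - x) < ENNReal.ofReal ε := by
  have hp0 : 0 < p := lt_of_lt_of_le zero_lt_one hp
  -- pointwise Cauchy
  have hptCauchy : ∀ k : ℤ, CauchySeq (fun n => X n k) := by
    intro k
    rw [Metric.cauchySeq_iff]
    intro ε hε
    obtain ⟨n₀, hn₀⟩ := hcauchy ε hε
    refine ⟨n₀, fun i hi j hj => ?_⟩
    have h1 : (‖(X i - X j) k‖₊ : ℝ≥0∞) < ENNReal.ofReal ε :=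
      lt_of_le_of_lt (nnnorm_le_morreyNorm p q hp _ k) (hn₀ i j hi hj)
    have h2 : ‖X i k - X j k‖ < ε := by
      rw [ENNReal.ofReal, ENNReal.coe_lt_coe] at h1
      have h3 := NNReal.coe_lt_coe.2 h1
      rw [Real.coe_toNNReal ε hε.le] at h3
      simpa using h3
    simpa [dist_eq_norm] using h2
  have hlim : ∀ k : ℤ, ∃ l, Filter.Tendsto (fun n => X n k) Filter.atTop (nhds l) :=
    fun k => cauchySeq_tendsto_of_complete (hptCauchy k)
  choose x hx using hlim
  -- key estimate: eventually `morreyNorm (X n - x) ≤ ε`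
  have key : ∀ ε : ℝ, 0 < ε → ∃ n₀ : ℕ, ∀ n, n₀ ≤ n →
      morreyNorm p q (X n - x) ≤ ENNReal.ofReal ε := by
    intro ε hε
    obtain ⟨n₀, hn₀⟩ := hcauchy ε hε
    refine ⟨n₀, fun n hn => ?_⟩
    rw [morreyNorm_eq]
    refine iSup₂_le fun m N => ?_
    have ht : Filter.Tendsto (fun j => morreyT p q m N (X n - X j)) Filter.atTop
        (nhds (morreyT p q m N (X n - x))) := by
      refine morreyT_tendsto p q hp0 m N _ _ fun k => ?_
      simpa using (tendsto_const_nhds.sub (hx k))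
    refine le_of_tendsto ht ?_
    filter_upwards [Filter.eventually_ge_atTop n₀] with j hj
    exact le_trans (morreyT_le p q m N _) (hn₀ n j hn hj).le
  obtain ⟨n₁, hn₁⟩ := key 1 one_pos
  have hfin : morreyNorm p q x < ⊤ := by
    rw [morreyNorm_eq]
    have hbound : ∀ (m : ℤ) (N : ℕ),
        morreyT p q m N x ≤ morreyNorm p q (X n₁ - x) + morreyNorm p q (X n₁) := by
      intro m N
      have hxeq : x = (fun k => x k - X n₁ k) + X n₁ := by
        funext k; simp
      calc morreyT p q m N x
          = morreyT p q m N ((fun k => x k - X n₁ k) + X n₁) := by rw [← hxeq]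
        _ ≤ morreyT p q m N (fun k => x k - X n₁ k) + morreyT p q m N (X n₁) :=
            morreyT_add_le p q hp m N _ _
        _ = morreyT p q m N (X n₁ - x) + morreyT p q m N (X n₁) := by
            have hcongr : ∀ k : ℤ, ‖(fun k => x k - X n₁ k) k‖₊ = ‖(X n₁ - x) k‖₊ := by
              intro k
              simp only [Pi.sub_apply]
              rw [← neg_sub, nnnorm_neg]
            rw [morreyT_congr p q m N hcongr]
        _ ≤ morreyNorm p q (X n₁ - x) + morreyNorm p q (X n₁) :=
            add_le_add (morreyT_le p q m N _) (morreyT_le p q m N _)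
    refine lt_of_le_of_lt (iSup₂_le hbound) ?_
    exact ENNReal.add_lt_top.2 ⟨lt_of_le_of_lt (hn₁ n₁ le_rfl) ENNReal.ofReal_lt_top, hmem n₁⟩
  refine ⟨x, hfin, ?_⟩
  intro ε hε
  obtain ⟨n₀, hn₀⟩ := key (ε / 2) (by linarith)
  refine ⟨n₀, fun n hn => ?_⟩
  refine lt_of_le_of_lt (hn₀ n hn) ?_
  rw [ENNReal.ofReal_lt_ofReal_iff hε]
  linarith
end

section
/- Let 1 ≤ p₁ ≤ p₂ ≤ q < ∞. Then ℓ^{p₂}_q ⊆ ℓ^{p₁}_q, and ‖x‖_{ℓ^{p₁}_q} ≤ ‖x‖_{ℓ^{p₂}_q} for every x ∈ ℓ^{p₂}_q. -/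
open scoped ENNReal NNReal BigOperators

theorem stmt5 (p₁ p₂ q : ℝ) (hp₁ : 1 ≤ p₁) (hp : p₁ ≤ p₂) (hq : p₂ ≤ q) (x : ℤ → ℂ)
    (hx : morreyNorm p₂ q x < ⊤) :
    morreyNorm p₁ q x ≤ morreyNorm p₂ q x := by
  have hp₁0 : (0:ℝ) < p₁ := lt_of_lt_of_le one_pos hp₁
  have hp₂0 : (0:ℝ) < p₂ := lt_of_lt_of_le hp₁0 hp
  refine iSup₂_le fun m N => ?_
  refine le_trans ?_ (le_iSup₂ (f := fun (m : ℤ) (N : ℕ) =>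
    (2 * (N : ℝ≥0∞) + 1) ^ (1 / q - 1 / p₂) *
      (∑ k ∈ S m N, (‖x k‖₊ : ℝ≥0∞) ^ p₂) ^ (1 / p₂)) m N)
  set c : ℝ≥0∞ := 2 * (N : ℝ≥0∞) + 1 with hc
  have hc0 : c ≠ 0 := by simp [hc]
  have hct : c ≠ ⊤ := by
    simp [hc]
    exact ENNReal.mul_ne_top (by simp) (ENNReal.natCast_ne_top N)
  have hcard : ∑ k ∈ S m N, (1:ℝ≥0∞) = c := by
    rw [Finset.sum_const, nsmul_eq_mul]
    have : (S m N).card = 2 * N + 1 := by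
      simp [S, Int.card_Icc]
      omega
    rw [this]
    push_cast
    ring
  set a : ℤ → ℝ≥0∞ := fun k => (‖x k‖₊ : ℝ≥0∞)
  have h1 : (1:ℝ) ≤ p₂ / p₁ := (one_le_div hp₁0).2 hp
  have key := ENNReal.inner_le_weight_mul_Lp_of_nonneg (S m N) h1
    (fun _ => 1) (fun k => a k ^ p₁)
  simp only [one_mul] at key
  have hsimp : ∀ k, (a k ^ p₁) ^ (p₂ / p₁) = a k ^ p₂ := by
    intro k
    rw [← ENNReal.rpow_mul]
    congr 1
    field_simp
  simp only [hsimp, hcard] at key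
  -- key : ∑ a^p₁ ≤ c ^ (1 - (p₂/p₁)⁻¹) * (∑ a^p₂) ^ (p₂/p₁)⁻¹
  have key2 : (∑ k ∈ S m N, a k ^ p₁) ^ (1 / p₁) ≤
      c ^ (1 / p₁ - 1 / p₂) * (∑ k ∈ S m N, a k ^ p₂) ^ (1 / p₂) := by
    have := ENNReal.rpow_le_rpow key (by positivity : (0:ℝ) ≤ 1 / p₁)
    rw [ENNReal.mul_rpow_of_nonneg _ _ (by positivity : (0:ℝ) ≤ 1 / p₁),
      ← ENNReal.rpow_mul, ← ENNReal.rpow_mul] at this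
    have e2 : (p₂ / p₁)⁻¹ * (1 / p₁) = 1 / p₂ := by
      field_simp
    have e1 : (1 - (p₂ / p₁)⁻¹) * (1 / p₁) = 1 / p₁ - 1 / p₂ := by
      rw [sub_mul, one_mul, e2]
    rwa [e1, e2] at this
  calc c ^ (1 / q - 1 / p₁) * (∑ k ∈ S m N, a k ^ p₁) ^ (1 / p₁)
      ≤ c ^ (1 / q - 1 / p₁) *
        (c ^ (1 / p₁ - 1 / p₂) * (∑ k ∈ S m N, a k ^ p₂) ^ (1 / p₂)) :=
        mul_le_mul_right key2 _
    _ = c ^ (1 / q - 1 / p₂) * (∑ k ∈ S m N, a k ^ p₂) ^ (1 / p₂) := by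
        rw [← mul_assoc, ← ENNReal.rpow_add _ _ hc0 hct]
        ring_nf
end
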